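/- Let Z_1,…,Z_m be i.i.d. standard normal random variables, m ≥ 1. Then E[ (Σ_{i=1}^m Z_i⁴) / (Σ_{i=1}^m Z_i²) ] = 3m/(m+2). -/

import Mathlib

open MeasureTheory ProbabilityTheory

open Real Set Filter
open scoped ENNReal NNReal


namespace GMRAux

section Pieces

lemma integral_pi_prod {ι : Type*} [Fintype ι] (μ : Measure ℝ) [SigmaFinite μ]
    (f : ι → ℝ → ℝ) :
    ∫ z : ι → ℝ, ∏ i, f i (z i) ∂(Measure.pi fun _ => μ) = ∏ i, ∫ x, f i x ∂μ := by
  letI : MeasureSpace ℝ := ⟨μ⟩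
  exact MeasureTheory.integral_fintype_prod_eq_prod f

lemma integrable_pi_prod {ι : Type*} [Fintype ι] (μ : Measure ℝ) [SigmaFinite μ]
    (f : ι → ℝ → ℝ) (hf : ∀ i, Integrable (f i) μ) :
    Integrable (fun z : ι → ℝ => ∏ i, f i (z i)) (Measure.pi fun _ => μ) := by
  letI : MeasureSpace ℝ := ⟨μ⟩
  exact MeasureTheory.Integrable.fintype_prod hf

end Pieces

end GMRAux

namespace GMRAux

noncomputable def ν : Measure ℝ := gaussianReal 0 1

instance : IsProbabilityMeasure ν := by
  unfold ν; infer_instance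

lemma integral_gaussianReal (f : ℝ → ℝ) :
    ∫ x, f x ∂ν = ∫ x, gaussianPDFReal 0 1 x * f x := by
  rw [show ν = gaussianReal 0 1 from rfl, gaussianReal_of_var_ne_zero 0 one_ne_zero]
  have : gaussianPDF 0 1 = fun x => ((gaussianPDFReal 0 1 x).toNNReal : ℝ≥0∞) := rfl
  rw [this, integral_withDensity_eq_integral_smul
      ((measurable_gaussianPDFReal 0 1).real_toNNReal) f]
  refine integral_congr_ae (Eventually.of_forall fun x => ?_)
  simp [NNReal.smul_def, Real.coe_toNNReal _ (gaussianPDFReal_nonneg 0 1 x)]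

lemma pdf_mul (t x : ℝ) (g : ℝ) :
    gaussianPDFReal 0 1 x * (g * rexp (-(t * x^2)))
      = (√(2*π))⁻¹ * (g * rexp (-(t+1/2) * x^2)) := by
  simp only [gaussianPDFReal, NNReal.coe_one, mul_one, sub_zero]
  rw [show (√(2*π))⁻¹ * rexp (-x^2/2) * (g * rexp (-(t * x^2)))
      = (√(2*π))⁻¹ * (g * (rexp (-x^2/2) * rexp (-(t * x^2)))) by ring,
    ← Real.exp_add]
  ring_nf

lemma Gval {t : ℝ} (ht : 0 ≤ t) :
    ∫ x, rexp (-(t * x^2)) ∂ν = (1+2*t) ^ (-(1/2) : ℝ) := by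
  have hc : (0:ℝ) < t + 1/2 := by linarith
  have h2 : (0:ℝ) < 1 + 2*t := by linarith
  rw [integral_gaussianReal]
  calc ∫ x, gaussianPDFReal 0 1 x * rexp (-(t * x^2))
      = ∫ x, (√(2*π))⁻¹ * rexp (-(t+1/2) * x^2) := by
        refine integral_congr_ae (Eventually.of_forall fun x => ?_)
        simpa using pdf_mul t x 1
    _ = (√(2*π))⁻¹ * √(π/(t+1/2)) := by rw [integral_const_mul, integral_gaussian]
    _ = (1+2*t) ^ (-(1/2) : ℝ) := by
        rw [Real.rpow_neg h2.le, ← Real.sqrt_eq_rpow, ← Real.sqrt_inv, ← Real.sqrt_inv,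
          ← Real.sqrt_mul (by positivity)]
        congr 1
        have hπ := Real.pi_pos
        field_simp
        ring

lemma integral_pow4_gauss {c : ℝ} (hc : 0 < c) :
    ∫ x : ℝ, x^4 * rexp (-c * x^2) = (3/4) * √π * c ^ (-(5/2) : ℝ) := by
  have h2 : (∫ x : ℝ, x^4 * rexp (-c * x^2)) = 2 * ∫ y in Ioi (0:ℝ), y^4 * rexp (-c * y^2) := by
    rw [← integral_comp_abs (f := fun y : ℝ => y^4 * rexp (-c * y^2))]
    refine integral_congr_ae (Filter.Eventually.of_forall fun x => ?_)
    simp only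
    rw [show |x|^4 = x^4 from by rw [← abs_pow]; exact abs_of_nonneg (by positivity), sq_abs]
  rw [h2]
  have h3 : (∫ y in Ioi (0:ℝ), y^4 * rexp (-c * y^2))
      = ∫ y in Ioi (0:ℝ), y^((4:ℕ):ℝ) * rexp (-c * y^((2:ℕ):ℝ)) := by
    refine (setIntegral_congr_fun measurableSet_Ioi fun y _ => ?_)
    rw [Real.rpow_natCast, Real.rpow_natCast]
  rw [h3]
  rw [integral_rpow_mul_exp_neg_mul_rpow (by norm_num) (by norm_num) hc]
  rw [show (((4:ℕ):ℝ)+1)/(((2:ℕ):ℝ)) = 3/2 + 1 by norm_num, Real.Gamma_add_one (by norm_num),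
    show (3/2:ℝ) = 1/2 + 1 by norm_num, Real.Gamma_add_one (by norm_num),
    Real.Gamma_one_half_eq, show -(((4:ℕ):ℝ)+1)/(((2:ℕ):ℝ)) = -(5/2) by norm_num]
  ring

lemma Hval {t : ℝ} (ht : 0 ≤ t) :
    ∫ x, x^4 * rexp (-(t * x^2)) ∂ν = 3 * (1+2*t) ^ (-(5/2) : ℝ) := by
  have hc : (0:ℝ) < t + 1/2 := by linarith
  rw [integral_gaussianReal]
  have h4 : (2:ℝ) ^ (2:ℝ) = 4 := by
    have h := Real.rpow_natCast (2:ℝ) 2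
    rw [Nat.cast_ofNat] at h
    rw [h]; norm_num
  have e2 : (2:ℝ) ^ (-(5/2) : ℝ) = (4*√2)⁻¹ := by
    rw [Real.rpow_neg two_pos.le, show (5/2:ℝ) = 2+1/2 by norm_num,
      Real.rpow_add two_pos, h4, ← Real.sqrt_eq_rpow]
  calc ∫ x, gaussianPDFReal 0 1 x * (x^4 * rexp (-(t * x^2)))
      = ∫ x, (√(2*π))⁻¹ * (x^4 * rexp (-(t+1/2) * x^2)) := by
        refine integral_congr_ae (Eventually.of_forall fun x => ?_)
        exact pdf_mul t x (x^4)
    _ = (√(2*π))⁻¹ * ((3/4) * √π * (t+1/2) ^ (-(5/2) : ℝ)) := by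
        rw [integral_const_mul, integral_pow4_gauss hc]
    _ = 3 * (1+2*t) ^ (-(5/2) : ℝ) := by
        rw [show (1+2*t) = 2*(t+1/2) by ring, Real.mul_rpow two_pos.le hc.le, e2,
          Real.sqrt_mul two_pos.le]
        have hs2 : √2 ≠ 0 := by positivity
        have hsπ : √π ≠ 0 := by positivity
        field_simp

lemma integrable_pow_mul_exp (n : ℕ) {b : ℝ} (hb : 0 < b) :
    Integrable fun x : ℝ => x ^ n * rexp (-b * x ^ 2) := by
  have := integrable_rpow_mul_exp_neg_mul_sq hb (s := (n : ℝ))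
    (lt_of_lt_of_le neg_one_lt_zero (Nat.cast_nonneg n))
  simpa [Real.rpow_natCast] using this

lemma integrable_pow_exp_gaussianReal {n : ℕ} (hn : Even n) {t : ℝ} (ht : 0 ≤ t) :
    Integrable (fun x => x ^ n * rexp (-(t * x^2))) ν := by
  rw [show ν = gaussianReal 0 1 from rfl, gaussianReal_of_var_ne_zero 0 one_ne_zero,
    integrable_withDensity_iff (measurable_gaussianPDF 0 1)
      (ae_of_all _ fun x => ENNReal.ofReal_lt_top)]
  refine Integrable.mono' ((integrable_pow_mul_exp n one_half_pos).const_mul ((√(2*π))⁻¹))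
    ?_ (ae_of_all _ fun x => ?_)
  · apply Measurable.aestronglyMeasurable
    exact ((measurable_id.pow_const n).mul
      (((measurable_id.pow_const 2).const_mul t).neg.exp)).mul
      (measurable_gaussianPDF 0 1).ennreal_toReal
  · have hpdf : (gaussianPDF 0 1 x).toReal = (√(2*π))⁻¹ * rexp (-x^2/2) := by
      rw [show gaussianPDF 0 1 x = ENNReal.ofReal (gaussianPDFReal 0 1 x) from rfl,
        ENNReal.toReal_ofReal (gaussianPDFReal_nonneg 0 1 x)]
      simp [gaussianPDFReal]
    rw [hpdf]
    have h1 : rexp (-(t*x^2)) ≤ 1 := Real.exp_le_one_iff.mpr (by nlinarith [sq_nonneg x])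
    have h2 : (0:ℝ) ≤ x^n := hn.pow_nonneg x
    have h3 : (0:ℝ) < rexp (-x^2/2) := Real.exp_pos _
    have h4 : (0:ℝ) ≤ (√(2*π))⁻¹ := by positivity
    rw [Real.norm_of_nonneg (by positivity)]
    rw [show (√(2*π))⁻¹ * (x ^ n * rexp (-(1/2) * x ^ 2))
        = (√(2*π))⁻¹ * (x ^ n * rexp (-x^2/2)) by rw [show (-(1/2) : ℝ) * x^2 = -x^2/2 by ring]]
    nlinarith [mul_nonneg (mul_nonneg h4 h2) h3.le, Real.exp_pos (-(t*x^2))]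

lemma integrable_pow_gaussianReal {n : ℕ} (hn : Even n) :
    Integrable (fun x => x ^ n) ν := by
  have := integrable_pow_exp_gaussianReal hn (le_refl (0:ℝ))
  simpa using this

lemma integral_exp_Ioi {S : ℝ} (hS : 0 < S) :
    ∫ t in Ioi (0:ℝ), rexp (-(S * t)) = 1 / S := by
  have h := integral_Ioi_of_hasDerivAt_of_nonneg'
    (g := fun t => -(1/S) * rexp (-(S*t))) (g' := fun t => rexp (-(S*t))) (a := 0) (l := 0)
    ?_ (fun x _ => (Real.exp_pos _).le) ?_
  · rw [h]; simp
  · intro x _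
    have h1 : HasDerivAt (fun t : ℝ => -(S*t)) (-S) x := by
      simpa using ((hasDerivAt_id x).const_mul (-S))
    have h2 := (h1.exp).const_mul (-(1/S))
    convert h2 using 1
    · rfl
    · rfl
    have hS' : S ≠ 0 := hS.ne'
    field_simp
  · rw [show (0:ℝ) = -(1/S) * 0 by ring]
    apply Tendsto.const_mul
    apply Real.tendsto_exp_atBot.comp
    have : Tendsto (fun t : ℝ => S * t) atTop atTop :=
      Tendsto.const_mul_atTop hS tendsto_id
    exact tendsto_neg_atTop_atBot.comp this

lemma integral_rpow_Ioi {q : ℝ} (hq : 0 < q) :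
    ∫ t in Ioi (0:ℝ), (1+2*t) ^ (-q-1) = 1 / (2*q) := by
  have h := integral_Ioi_of_hasDerivAt_of_nonneg'
    (g := fun t => -(1/(2*q)) * (1+2*t) ^ (-q)) (g' := fun t => (1+2*t) ^ (-q-1)) (a := 0)
    (l := 0) ?_ (fun x hx => Real.rpow_nonneg (by nlinarith [mem_Ioi.mp hx]) _) ?_
  · rw [h]; simp
  · intro x hx
    have hx0 : (0:ℝ) ≤ x := hx
    have hb : (0:ℝ) < 1 + 2*x := by linarith
    have h1 : HasDerivAt (fun t : ℝ => 1+2*t) 2 x := by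
      simpa using ((hasDerivAt_id x).const_mul 2).const_add 1
    have h2 := (h1.rpow_const (p := -q) (Or.inl hb.ne')).const_mul (-(1/(2*q)))
    have h3 : -(1/(2*q)) * (2 * -q * (1+2*x) ^ (-q-1)) = ((2*q)/(2*q)) * (1+2*x) ^ (-q-1) := by
      ring
    rw [div_self (by positivity : (2*q) ≠ (0:ℝ)), one_mul] at h3
    simpa only [h3] using h2
  · rw [show (0:ℝ) = -(1/(2*q)) * 0 by ring]
    apply Tendsto.const_mul
    have hlin : Tendsto (fun t : ℝ => 1 + 2*t) atTop atTop :=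
      tendsto_atTop_add_const_left _ 1 (Tendsto.const_mul_atTop two_pos tendsto_id)
    exact (tendsto_rpow_neg_atTop hq).comp hlin

end GMRAux

namespace GMRMain

open GMRAux

variable {m : ℕ}

noncomputable abbrev μm (m : ℕ) : Measure (Fin m → ℝ) := Measure.pi fun _ : Fin m => ν

lemma key1 (z : Fin m → ℝ) :
    ∫ t in Ioi (0:ℝ), (∑ i, z i ^ 4) * rexp (-((∑ i, z i ^ 2) * t))
      = (∑ i, z i ^ 4) / (∑ i, z i ^ 2) := by
  rcases eq_or_lt_of_le (Finset.sum_nonneg fun i _ => sq_nonneg (z i)) with hS | hS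
  · have hz : ∀ i, z i = 0 := fun i => by
      have h0 := (Finset.sum_eq_zero_iff_of_nonneg
        (fun i (_ : i ∈ Finset.univ) => sq_nonneg (z i))).mp hS.symm i (Finset.mem_univ i)
      exact pow_eq_zero_iff two_ne_zero |>.mp h0
    simp [hz]
  · rw [MeasureTheory.integral_const_mul, integral_exp_Ioi hS, mul_one_div]

lemma intS : Integrable (fun z : Fin m → ℝ => ∑ i, z i ^ 2) (μm m) := by
  refine integrable_finset_sum _ fun i _ => ?_
  have h : (fun z : Fin m → ℝ => ∏ j, (z j) ^ (if j = i then 2 else 0))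
      = fun z => z i ^ 2 := by
    funext z
    rw [Finset.prod_eq_single_of_mem i (Finset.mem_univ i)
      (fun j _ hj => by rw [if_neg hj, pow_zero]), if_pos rfl]
  rw [← h]
  exact integrable_pi_prod ν _ fun j =>
    integrable_pow_gaussianReal (by split_ifs <;> decide)

lemma intDiv : Integrable (fun z : Fin m → ℝ => (∑ i, z i ^ 4) / (∑ i, z i ^ 2)) (μm m) := by
  refine Integrable.mono' intS ?_ (ae_of_all _ fun z => ?_)
  · apply Measurable.aestronglyMeasurable
    exact (Finset.measurable_sum _ fun i _ => (measurable_pi_apply i).pow_const 4).div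
      (Finset.measurable_sum _ fun i _ => (measurable_pi_apply i).pow_const 2)
  · have hA : (0:ℝ) ≤ ∑ i, z i ^ 4 := Finset.sum_nonneg fun i _ => by positivity
    have hS0 : (0:ℝ) ≤ ∑ i, z i ^ 2 := Finset.sum_nonneg fun i _ => sq_nonneg _
    rw [Real.norm_of_nonneg (div_nonneg hA hS0)]
    rcases eq_or_lt_of_le hS0 with hS | hS
    · rw [← hS, div_zero]
    · rw [div_le_iff₀ hS]
      have hsingle : ∀ i, z i ^ 2 ≤ ∑ j, z j ^ 2 := fun i =>
        Finset.single_le_sum (fun j _ => sq_nonneg (z j)) (Finset.mem_univ i)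
      calc ∑ i, z i ^ 4 ≤ ∑ i, z i ^ 2 * ∑ j, z j ^ 2 :=
            Finset.sum_le_sum fun i _ => by nlinarith [hsingle i, sq_nonneg (z i)]
        _ = (∑ i, z i ^ 2) * ∑ j, z j ^ 2 := by rw [← Finset.sum_mul]

lemma stepD {t : ℝ} (ht : 0 < t) :
    ∫ z : Fin m → ℝ, (∑ i, z i ^ 4) * rexp (-((∑ i, z i ^ 2) * t)) ∂(μm m)
      = (m:ℝ) * (3 * (1+2*t) ^ (-(5/2):ℝ) * ((1+2*t) ^ (-(1/2):ℝ)) ^ (m-1)) := by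
  set f : Fin m → Fin m → ℝ → ℝ :=
    fun i j x => x ^ (if j = i then 4 else 0) * rexp (-(t * x^2)) with hf
  have hpt : ∀ z : Fin m → ℝ,
      (∑ i, z i ^ 4) * rexp (-((∑ i, z i ^ 2) * t)) = ∑ i, ∏ j, f i j (z j) := by
    intro z
    rw [Finset.sum_mul]
    refine Finset.sum_congr rfl fun i _ => ?_
    simp only [hf]
    rw [Finset.prod_mul_distrib]
    have e1 : (∏ j, (z j) ^ (if j = i then 4 else 0)) = z i ^ 4 := by
      rw [Finset.prod_eq_single_of_mem i (Finset.mem_univ i)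
        (fun j _ hj => by rw [if_neg hj, pow_zero]), if_pos rfl]
    have e2 : (∏ j, rexp (-(t * (z j)^2))) = rexp (-((∑ j, z j ^ 2) * t)) := by
      rw [← Real.exp_sum]
      congr 1
      calc ∑ x, -(t * z x ^ 2) = -∑ x, t * z x ^ 2 := Finset.sum_neg_distrib _
        _ = -(t * ∑ x, z x ^ 2) := by rw [Finset.mul_sum]
        _ = -((∑ j, z j ^ 2) * t) := by ring
    rw [e1, e2]
  have hint : ∀ i j, Integrable (f i j) ν := by
    intro i j
    simp only [hf]
    exact integrable_pow_exp_gaussianReal (by split_ifs <;> decide) ht.le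
  calc ∫ z : Fin m → ℝ, (∑ i, z i ^ 4) * rexp (-((∑ i, z i ^ 2) * t)) ∂(μm m)
      = ∫ z : Fin m → ℝ, ∑ i, ∏ j, f i j (z j) ∂(μm m) := by
        refine integral_congr_ae (ae_of_all _ fun z => ?_)
        exact hpt z
    _ = ∑ i, ∫ z : Fin m → ℝ, ∏ j, f i j (z j) ∂(μm m) :=
        integral_finset_sum _ fun i _ => integrable_pi_prod ν (f i) (hint i)
    _ = ∑ i, ∏ j, ∫ x, f i j x ∂ν :=
        Finset.sum_congr rfl fun i _ => integral_pi_prod ν (f i)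
    _ = ∑ _i : Fin m, (3 * (1+2*t) ^ (-(5/2):ℝ) * ((1+2*t) ^ (-(1/2):ℝ)) ^ (m-1)) := by
        refine Finset.sum_congr rfl fun i _ => ?_
        have hij : ∀ j, (∫ x, f i j x ∂ν)
            = if j = i then 3 * (1+2*t) ^ (-(5/2):ℝ) else (1+2*t) ^ (-(1/2):ℝ) := by
          intro j
          by_cases h : j = i
          · rw [if_pos h]
            simp only [hf, if_pos h]
            exact Hval ht.le
          · rw [if_neg h]
            simp only [hf, if_neg h, pow_zero, one_mul]
            exact Gval ht.le
        rw [Finset.prod_congr rfl fun j _ => hij j,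
          ← Finset.mul_prod_erase _ _ (Finset.mem_univ i), if_pos rfl,
          Finset.prod_congr rfl (fun j hj => if_neg (Finset.ne_of_mem_erase hj)),
          Finset.prod_const, Finset.card_erase_of_mem (Finset.mem_univ i),
          Finset.card_univ, Fintype.card_fin]
    _ = (m:ℝ) * (3 * (1+2*t) ^ (-(5/2):ℝ) * ((1+2*t) ^ (-(1/2):ℝ)) ^ (m-1)) := by
        rw [Finset.sum_const, Finset.card_univ, Fintype.card_fin, nsmul_eq_mul]


lemma intF :
    Integrable (Function.uncurry fun (z : Fin m → ℝ) (t : ℝ) =>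
      (∑ i, z i ^ 4) * rexp (-((∑ i, z i ^ 2) * t)))
      ((μm m).prod (volume.restrict (Ioi 0))) := by
  have hcont : Continuous (Function.uncurry fun (z : Fin m → ℝ) (t : ℝ) =>
      (∑ i, z i ^ 4) * rexp (-((∑ i, z i ^ 2) * t))) := by
    apply Continuous.mul
    · exact (continuous_finset_sum _ fun i _ => (continuous_apply i).pow 4).comp continuous_fst
    · exact Real.continuous_exp.comp
        (((continuous_finset_sum _ fun i _ => (continuous_apply i).pow 2).comp
          continuous_fst).mul continuous_snd).neg
  refine (integrable_prod_iff hcont.aestronglyMeasurable).2 ⟨ae_of_all _ fun z => ?_, ?_⟩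
  all_goals simp only [Function.uncurry_apply_pair]
  · rcases eq_or_lt_of_le (Finset.sum_nonneg fun i (_ : i ∈ Finset.univ) =>
        sq_nonneg (z i)) with hS | hS
    · have hz : ∀ i, z i = 0 := fun i => by
        have h0 := (Finset.sum_eq_zero_iff_of_nonneg
          (fun i (_ : i ∈ Finset.univ) => sq_nonneg (z i))).mp hS.symm i (Finset.mem_univ i)
        exact pow_eq_zero_iff two_ne_zero |>.mp h0
      have hfun : (fun tt : ℝ => (∑ i, z i ^ 4) * rexp (-((∑ i, z i ^ 2) * tt)))
          = fun _ => 0 := funext fun tt => by simp [hz]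
      rw [hfun]
      exact integrable_zero _ _ _
    · have h2 := (exp_neg_integrableOn_Ioi 0 hS).const_mul (∑ i, z i ^ 4)
      simpa [neg_mul] using h2
  · refine intDiv.congr (ae_of_all _ fun z => ?_)
    have : ∫ t in Ioi (0:ℝ), ‖(∑ i, z i ^ 4) * rexp (-((∑ i, z i ^ 2) * t))‖
        = ∫ t in Ioi (0:ℝ), (∑ i, z i ^ 4) * rexp (-((∑ i, z i ^ 2) * t)) := by
      refine integral_congr_ae (ae_of_all _ fun tt => ?_)
      exact Real.norm_of_nonneg (mul_nonneg
        (Finset.sum_nonneg fun i _ => by positivity) (Real.exp_pos _).le)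
    show (∑ i, z i ^ 4) / (∑ i, z i ^ 2) = _
    rw [← key1 z, ← this]

end GMRMain

open GMRMain GMRAux

/-- **Fourth-to-second moment ratio for i.i.d. Gaussians**
(Dereziński–Warmuth–Hsu, computation in Theorem 14 via Proposition 17).
If `Z₁,…,Z_m` are i.i.d. standard normal (`m ≥ 1`), then
`E[(Σᵢ Zᵢ⁴)/(Σᵢ Zᵢ²)] = 3m/(m+2)`. -/
theorem gaussian_moment_ratio (m : ℕ) (hm : 1 ≤ m) :
    (∫ z : Fin m → ℝ,
        (∑ i : Fin m, z i ^ 4) / (∑ i : Fin m, z i ^ 2)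
        ∂(Measure.pi fun _ : Fin m => gaussianReal 0 1)) =
      3 * (m : ℝ) / ((m : ℝ) + 2) := by
  have h0 : (Measure.pi fun _ : Fin m => gaussianReal 0 1) = μm m := rfl
  rw [h0]
  have hq : (0:ℝ) < ((m:ℝ) + 2)/2 := by positivity
  calc (∫ z : Fin m → ℝ, (∑ i : Fin m, z i ^ 4) / (∑ i : Fin m, z i ^ 2) ∂(μm m))
      = ∫ z : Fin m → ℝ, (∫ t in Ioi (0:ℝ),
          (∑ i, z i ^ 4) * rexp (-((∑ i, z i ^ 2) * t))) ∂(μm m) :=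
        integral_congr_ae (ae_of_all _ fun z => (key1 z).symm)
    _ = ∫ t in Ioi (0:ℝ), (∫ z : Fin m → ℝ,
          (∑ i, z i ^ 4) * rexp (-((∑ i, z i ^ 2) * t)) ∂(μm m)) :=
        integral_integral_swap intF
    _ = ∫ t in Ioi (0:ℝ), (m:ℝ) * (3 * (1+2*t) ^ (-(5/2):ℝ)
          * ((1+2*t) ^ (-(1/2):ℝ)) ^ (m-1)) :=
        setIntegral_congr_fun measurableSet_Ioi fun t ht => stepD (mem_Ioi.mp ht)
    _ = ∫ t in Ioi (0:ℝ), (3*(m:ℝ)) * (1+2*t) ^ (-(((m:ℝ)+2)/2)-1) := by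
        refine setIntegral_congr_fun measurableSet_Ioi fun t ht => ?_
        have hb : (0:ℝ) < 1+2*t := by have := mem_Ioi.mp ht; linarith
        rw [← Real.rpow_natCast ((1+2*t) ^ (-(1/2):ℝ)) (m-1), ← Real.rpow_mul hb.le,
          mul_assoc (3:ℝ), ← Real.rpow_add hb,
          show (-(5/2):ℝ) + (-(1/2))*(((m-1:ℕ)):ℝ) = -(((m:ℝ)+2)/2)-1 by
            rw [Nat.cast_sub hm]; push_cast; ring]
        ring
    _ = (3*(m:ℝ)) * (1/(2*(((m:ℝ)+2)/2))) := by
        rw [MeasureTheory.integral_const_mul, integral_rpow_Ioi hq]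
    _ = 3 * (m:ℝ) / ((m:ℝ) + 2) := by
        have h2 : ((m:ℝ)+2) ≠ 0 := by positivity
        field_simp
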